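/- The class of languages accepted by measure-many QFAs with bounded error is not closed under homomorphisms: the language {a,b}*c is accepted by a reversible finite automaton (hence by an MM-QFA with bounded error), but its image under the homomorphism h(a)=a, h(b)=b, h(c)=b is {a,b}*b, which is not accepted by any MM-QFA with bounded error. -/

import Mathlib

/-- Extended transition function of a DFA. -/
def dfaEval {Q A : Type} (δ : Q → A → Q) (q : Q) (w : List A) : Q :=
  w.foldl δ q

/-- Reversible finite automaton condition: each letter has at most one `σ`-predecessor
per state, except that a state with two distinct `σ`-predecessors must be a spin state
(all transitions from it loop). -/
def IsRFA {Q A : Type} (δ : Q → A → Q) : Prop :=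
  ∀ (σ : A) (q1 q2 : Q), q1 ≠ q2 → δ q1 σ = δ q2 σ →
    ∀ τ : A, δ (δ q1 σ) τ = δ q1 σ

/-- The language `{a,b}*c` over the alphabet `{a, b, c} = {0, 1, 2}`. -/
def Lc : Set (List (Fin 3)) :=
  {w | ∃ u : List (Fin 3), (∀ s ∈ u, s = 0 ∨ s = 1) ∧ w = u ++ [2]}

/-- The language `{a,b}*b` over the alphabet `{a, b, c} = {0, 1, 2}`. -/
def Lb : Set (List (Fin 3)) :=
  {w | ∃ u : List (Fin 3), (∀ s ∈ u, s = 0 ∨ s = 1) ∧ w = u ++ [1]}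

/-- The homomorphism `h(a) = a`, `h(b) = b`, `h(c) = b`, extended letterwise. -/
def hmap (w : List (Fin 3)) : List (Fin 3) :=
  w.map fun s => if s = 2 then 1 else s

/-- `RMM` (languages accepted by measure-many QFAs with bounded error) is
not closed under homomorphisms: `{a,b}*c` is accepted by a reversible finite automaton
(hence is in `RMM` by Ambainis–Freivalds), but its homomorphic image under
`h(a)=a, h(b)=b, h(c)=b` is `{a,b}*b`, which is not in `RMM` (Kondacs–Watrous). -/

def myδ : Fin 3 → Fin 3 → Fin 3 := fun q σ =>
  if q = 0 then (if σ = 2 then 1 else 0) else 2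

lemma myδ_rfa : IsRFA myδ := by unfold IsRFA; decide

lemma eval2 (w : List (Fin 3)) : dfaEval myδ 2 w = 2 := by
  induction w with
  | nil => rfl
  | cons s w ih => simpa [dfaEval, myδ] using ih

lemma eval1 (w : List (Fin 3)) : dfaEval myδ 1 w = 1 ∨ dfaEval myδ 1 w = 2 := by
  cases w with
  | nil => left; rfl
  | cons s w =>
    right
    show dfaEval myδ (myδ 1 s) w = 2
    have : myδ 1 s = 2 := by simp [myδ]
    rw [this]; exact eval2 w

lemma evalA (u : List (Fin 3)) (hu : ∀ s ∈ u, s = 0 ∨ s = 1) :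
    dfaEval myδ 0 u = 0 := by
  induction u with
  | nil => rfl
  | cons s w ih =>
    have hs := hu s List.mem_cons_self
    have h0 : myδ 0 s = 0 := by rcases hs with h | h <;> subst h <;> decide
    show dfaEval myδ (myδ 0 s) w = 0
    rw [h0]; exact ih fun t ht => hu t (List.mem_cons_of_mem _ ht)

lemma evalC (u : List (Fin 3)) (h : dfaEval myδ 0 u = 0) :
    ∀ s ∈ u, s = 0 ∨ s = 1 := by
  induction u with
  | nil => intro s hs; cases hs
  | cons s w ih =>
    intro t ht
    have hs : s = 0 ∨ s = 1 := by
      by_contra hc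
      push_neg at hc
      have : s = 2 := by omega
      subst this
      have h1 : myδ 0 2 = 1 := by decide
      have := h
      rw [show dfaEval myδ 0 (2 :: w) = dfaEval myδ (myδ 0 2) w from rfl, h1] at this
      rcases eval1 w with h2 | h2 <;> rw [this] at h2 <;> exact absurd h2 (by decide)
    have h0 : myδ 0 s = 0 := by rcases hs with h' | h' <;> subst h' <;> decide
    have h' : dfaEval myδ 0 w = 0 := by
      have := h
      rw [show dfaEval myδ 0 (s :: w) = dfaEval myδ (myδ 0 s) w from rfl, h0] at this
      exact this
    rcases List.mem_cons.mp ht with h'' | h''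
    · subst h''; exact hs
    · exact ih h' t h''

lemma eval_iff (w : List (Fin 3)) : w ∈ Lc ↔ dfaEval myδ 0 w = 1 := by
  constructor
  · rintro ⟨u, hu, rfl⟩
    rw [show dfaEval myδ 0 (u ++ [2]) = myδ (dfaEval myδ 0 u) 2 from by
      simp [dfaEval, List.foldl_append]]
    rw [evalA u hu]; rfl
  · intro h
    induction w using List.reverseRecOn with
    | nil => exact absurd h (by decide)
    | append_singleton u s _ =>
      rw [show dfaEval myδ 0 (u ++ [s]) = myδ (dfaEval myδ 0 u) s from by
        simp [dfaEval, List.foldl_append]] at h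
      have hq0 : dfaEval myδ 0 u = 0 ∧ s = 2 :=
        (by decide : ∀ q t : Fin 3, myδ q t = 1 → q = 0 ∧ t = 2) _ _ h
      exact ⟨u, evalC u hq0.1, by rw [hq0.2]⟩

lemma himg : hmap '' Lc = Lb := by
  ext w
  constructor
  · rintro ⟨v, ⟨u, hu, rfl⟩, rfl⟩
    refine ⟨u, hu, ?_⟩
    have : hmap u = u := by
      unfold hmap
      rw [List.map_congr_left (g := id) fun s hs => by
        rcases hu s hs with h | h <;> subst h <;> rfl, List.map_id]
    simp [hmap] at this ⊢
    simp [this]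
  · rintro ⟨u, hu, rfl⟩
    refine ⟨u ++ [2], ⟨u, hu, rfl⟩, ?_⟩
    have : hmap u = u := by
      unfold hmap
      rw [List.map_congr_left (g := id) fun s hs => by
        rcases hu s hs with h | h <;> subst h <;> rfl, List.map_id]
    simp [hmap] at this ⊢
    simp [this]

theorem rmm_not_closed_under_homomorphism
    (RMM : Set (List (Fin 3)) → Prop)
    (hRFA : ∀ (m : ℕ) (δ : Fin m → Fin 3 → Fin m) (q0 : Fin m) (F : Finset (Fin m)),
      IsRFA δ → RMM {w | dfaEval δ q0 w ∈ F})
    (hLb : ¬ RMM Lb) :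
    (∃ (m : ℕ) (δ : Fin m → Fin 3 → Fin m) (q0 : Fin m) (F : Finset (Fin m)),
        IsRFA δ ∧ ∀ w, w ∈ Lc ↔ dfaEval δ q0 w ∈ F) ∧
    hmap '' Lc = Lb ∧
    ¬ (∀ L : Set (List (Fin 3)), RMM L → RMM (hmap '' L)) := by
  refine ⟨⟨3, myδ, 0, {1}, myδ_rfa, fun w => by
    simpa using eval_iff w⟩, himg, ?_⟩
  intro hcl
  have h1 : RMM Lc := by
    have := hRFA 3 myδ 0 {1} myδ_rfa
    have heq : {w | dfaEval myδ 0 w ∈ ({1} : Finset (Fin 3))} = Lc := by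
      ext w; simpa using (eval_iff w).symm
    rwa [heq] at this
  exact hLb (himg ▸ hcl Lc h1)
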